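/- Let d ≥ 2 and let u_0, u_1, …, u_d be unit vectors in ℝ^d. The following are equivalent: (a) there exists no nonzero vector e ∈ ℝ^d with ⟨e, u_0⟩ = 0 and ⟨e, u_i⟩ ≤ 0 for all i ∈ {1,…,d} (i.e., no closed half-sphere of S^{d−1} whose bounding great subsphere passes through u_0 contains all of u_1,…,u_d); (b) the origin belongs to the interior, computed within the hyperplane u_0^⊥, of the convex hull of the orthogonal projections of u_1,…,u_d onto u_0^⊥. -/

import Mathlib

open MeasureTheory Metric
open scoped RealInnerProductSpace

noncomputable section

/-- `Euc d` is the Euclidean space `ℝ^d`. -/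
abbrev Euc (d : ℕ) := EuclideanSpace ℝ (Fin d)

/-- The pointy condition: the origin belongs to the interior, computed within the hyperplane
`u₀ᗮ`, of the convex hull of the orthogonal projections of the points `u i` onto `u₀ᗮ`. -/
def Pointy {d k : ℕ} (u₀ : Euc d) (u : Fin k → Euc d) : Prop :=
  (0 : (Submodule.span ℝ {u₀})ᗮ) ∈ interior (convexHull ℝ
    (Set.range fun i => Submodule.orthogonalProjectionOnto (Submodule.span ℝ {u₀})ᗮ (u i)))

lemma aux_zero_mem_interior_convexHull_iff {E : Type*} [NormedAddCommGroup E]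
    [InnerProductSpace ℝ E] [FiniteDimensional ℝ E] [Nontrivial E]
    {ι : Type*} (v : ι → E) :
    (¬ ∃ e : E, e ≠ 0 ∧ ∀ i, ⟪e, v i⟫ ≤ 0) ↔
      (0 : E) ∈ interior (convexHull ℝ (Set.range v)) := by
  constructor
  · intro hno
    by_contra h0
    apply hno
    by_cases hne : interior (convexHull ℝ (Set.range v)) = ∅
    · -- empty interior: the points lie in a proper affine subspace
      rcases isEmpty_or_nonempty ι with hι | hι
      · obtain ⟨e, he⟩ := exists_ne (0 : E)
        exact ⟨e, he, fun i => isEmptyElim i⟩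
      · obtain ⟨i₀⟩ := hι
        have hspan : affineSpan ℝ (Set.range v) ≠ ⊤ := by
          intro htop
          have : (interior (convexHull ℝ (Set.range v))).Nonempty := by
            rw [(convex_convexHull ℝ _).interior_nonempty_iff_affineSpan_eq_top,
              affineSpan_convexHull]
            exact htop
          rw [hne] at this
          exact Set.not_nonempty_empty this
        have hdir : (affineSpan ℝ (Set.range v)).direction ≠ ⊤ := by
          intro htop
          exact hspan ((AffineSubspace.direction_eq_top_iff_of_nonempty
            ((affineSpan_nonempty (k := ℝ)).mpr ⟨v i₀, Set.mem_range_self i₀⟩)).mp htop)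
        obtain ⟨e, hem, he0⟩ : ∃ e ∈ ((affineSpan ℝ (Set.range v)).direction)ᗮ, e ≠ 0 := by
          by_contra hc
          push_neg at hc
          have : ((affineSpan ℝ (Set.range v)).direction)ᗮ = ⊥ := by
            rw [Submodule.eq_bot_iff]
            intro x hx
            by_contra hx0
            exact hx0 (hc x hx)
          exact hdir (Submodule.orthogonal_eq_bot_iff.mp this)
        have hconst : ∀ i, ⟪e, v i⟫ = ⟪e, v i₀⟫ := by
          intro i
          have hmem : v i - v i₀ ∈ (affineSpan ℝ (Set.range v)).direction :=
            AffineSubspace.vsub_mem_direction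
              (subset_affineSpan ℝ _ (Set.mem_range_self i))
              (subset_affineSpan ℝ _ (Set.mem_range_self i₀))
          have := hem _ hmem
          have : ⟪e, v i - v i₀⟫ = 0 := by
            simpa [real_inner_comm] using this
          rw [inner_sub_right] at this
          linarith
        rcases le_or_gt ⟪e, v i₀⟫ 0 with hc | hc
        · exact ⟨e, he0, fun i => (hconst i).le.trans hc⟩
        · refine ⟨-e, neg_ne_zero.mpr he0, fun i => ?_⟩
          rw [inner_neg_left, hconst i]
          linarith
    · -- nonempty interior: separate 0 from the open convex interior
      obtain ⟨f, hf⟩ := geometric_hahn_banach_open_point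
        ((convex_convexHull ℝ (Set.range v)).interior) isOpen_interior h0
      simp only [map_zero] at hf
      set e : E := (InnerProductSpace.toDual ℝ E).symm f with hedef
      have hfe : ∀ x : E, ⟪e, x⟫ = f x := by
        intro x
        rw [hedef, ← InnerProductSpace.toDual_apply_apply]
        simp
      obtain ⟨a, ha⟩ := Set.nonempty_iff_ne_empty.mpr hne
      have hfa : f a < 0 := hf a ha
      have he0 : e ≠ 0 := by
        intro h
        rw [h] at hfe
        have := (hfe a).symm
        simp only [inner_zero_left] at this
        rw [← this] at hfa
        exact lt_irrefl _ hfa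
      refine ⟨e, he0, fun i => ?_⟩
      rw [hfe]
      -- move along the segment from `a` toward `v i`
      by_contra hc
      push_neg at hc
      set b : ℝ := -f a with hb
      set c : ℝ := f (v i) with hcdef
      have hbpos : 0 < b := by simp [hb]; linarith
      have hcpos : 0 < c := hc
      have hbc : 0 < b + c := by linarith
      have hmemi : (c / (b + c)) • a + (b / (b + c)) • v i ∈
          interior (convexHull ℝ (Set.range v)) :=
        (convex_convexHull ℝ (Set.range v)).combo_interior_self_mem_interior ha
          (subset_convexHull ℝ _ (Set.mem_range_self i))
          (by positivity) (by positivity) (by rw [← add_div, add_comm, div_self hbc.ne'])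
      have := hf _ hmemi
      rw [map_add, f.map_smul, f.map_smul] at this
      simp only [smul_eq_mul] at this
      have hfa' : f a = -b := by rw [hb]; ring
      rw [hfa', ← hcdef] at this
      rw [div_mul_eq_mul_div, div_mul_eq_mul_div, ← add_div] at this
      have : c * -b + b * c < 0 := by
        have := (div_neg_iff.mp this)
        rcases this with ⟨h1, h2⟩ | ⟨h1, h2⟩
        · linarith
        · exact h1
      nlinarith
  · rintro hmem ⟨e, he0, hle⟩
    obtain ⟨ε, hε, hball⟩ := Metric.mem_nhds_iff.mp (mem_interior_iff_mem_nhds.mp hmem)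
    have hCsub : convexHull ℝ (Set.range v) ⊆ {x | ⟪e, x⟫ ≤ 0} := by
      apply convexHull_min
      · rintro x ⟨i, rfl⟩; exact hle i
      · exact convex_halfSpace_le (by exact ⟨fun a b => inner_add_right _ _ _,
          fun c x => real_inner_smul_right e x c⟩) 0
    have hx : (ε / (2 * ‖e‖)) • e ∈ ball (0 : E) ε := by
      rw [mem_ball_zero_iff, norm_smul]
      have hne : ‖e‖ > 0 := norm_pos_iff.mpr he0
      rw [Real.norm_eq_abs, abs_of_pos (by positivity)]
      rw [div_mul_eq_mul_div, mul_comm]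
      rw [div_lt_iff₀ (by positivity)]
      nlinarith
    have := hCsub (hball hx)
    simp only [Set.mem_setOf_eq, real_inner_smul_right] at this
    have hne : ‖e‖ > 0 := norm_pos_iff.mpr he0
    have hsq : (0:ℝ) < ⟪e, e⟫ := by
      rw [real_inner_self_eq_norm_sq]; positivity
    have hpos : (0:ℝ) < ε / (2 * ‖e‖) := by positivity
    nlinarith [mul_pos hpos hsq]

/-- Characterization of the pointy condition: no closed half-sphere whose bounding great
subsphere passes through `u₀` contains all of `u₁, …, u_d`, if and only if the origin lies
in the interior (within the hyperplane `u₀ᗮ`) of the convex hull of the projections of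
`u₁, …, u_d` onto `u₀ᗮ`. -/
theorem pointy_characterization (d : ℕ) (hd : 2 ≤ d) (u₀ : Euc d) (u : Fin d → Euc d)
    (h₀ : ‖u₀‖ = 1) (h : ∀ i, ‖u i‖ = 1) :
    (¬ ∃ e : Euc d, e ≠ 0 ∧ ⟪e, u₀⟫ = 0 ∧ ∀ i, ⟪e, u i⟫ ≤ 0) ↔ Pointy u₀ u := by
  have hu₀ : u₀ ≠ 0 := by
    intro h'
    rw [h', norm_zero] at h₀
    norm_num at h₀
  have hfinV : Module.finrank ℝ ((Submodule.span ℝ ({u₀} : Set (Euc d)))ᗮ) = d - 1 := by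
    have h1 : Module.finrank ℝ (Submodule.span ℝ ({u₀} : Set (Euc d))) = 1 :=
      finrank_span_singleton hu₀
    have h2 := Submodule.finrank_add_finrank_orthogonal
      (K := Submodule.span ℝ ({u₀} : Set (Euc d)))
    rw [h1, finrank_euclideanSpace, Fintype.card_fin] at h2
    omega
  have : Nontrivial ((Submodule.span ℝ ({u₀} : Set (Euc d)))ᗮ) := by
    apply Module.nontrivial_of_finrank_pos (R := ℝ)
    rw [hfinV]; omega
  unfold Pointy
  rw [← aux_zero_mem_interior_convexHull_iff
    (fun i => Submodule.orthogonalProjectionOnto (Submodule.span ℝ ({u₀} : Set (Euc d)))ᗮ (u i))]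
  constructor
  · intro hno ⟨e', he'0, hle⟩
    apply hno
    refine ⟨(e' : Euc d), by simpa using he'0, ?_, fun i => ?_⟩
    · have := e'.2
      rw [Submodule.mem_orthogonal_singleton_iff_inner_right] at this
      rw [real_inner_comm]; exact this
    · have := hle i
      rwa [Submodule.inner_orthogonalProjectionOnto_eq_of_mem_left] at this
  · intro hno ⟨e, he0, heu₀, hle⟩
    apply hno
    have heV : e ∈ (Submodule.span ℝ ({u₀} : Set (Euc d)))ᗮ := by
      rw [Submodule.mem_orthogonal_singleton_iff_inner_right, real_inner_comm]
      exact heu₀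
    refine ⟨⟨e, heV⟩, by simpa using he0, fun i => ?_⟩
    rw [Submodule.inner_orthogonalProjectionOnto_eq_of_mem_left]
    exact hle i
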